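/- Let p be a prime, r > 1, and N = p^r. Let k be a subring of ℂ containing all roots of unity. Let χ : (ℤ/N)^× → k^× be an imprimitive character (one factoring through (ℤ/p^{r−1})^×) and τ : ℤ/N → k^× a non-injective group homomorphism. Denote by χ̄ : (ℤ/p^{r−1})^× → k^× and τ̄ : ℤ/p^{r−1} → k^× the induced homomorphisms. Then the Gauss sum satisfies G_{p^r}(χ, τ) = p · G_{p^{r−1}}(χ̄, τ̄). -/

import Mathlib

theorem stmt_14 (p r : ℕ) (hp : p.Prime) (hr : 1 < r)
    [NeZero (p ^ r)] [NeZero (p ^ (r - 1))]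
    (K : Subring ℂ) (hK : ∀ z : ℂ, (∃ n : ℕ, 0 < n ∧ z ^ n = 1) → z ∈ K)
    (χ : (ZMod (p ^ r))ˣ →* (↥K)ˣ) (χ' : (ZMod (p ^ (r - 1)))ˣ →* (↥K)ˣ)
    (hχ : ∀ t : (ZMod (p ^ r))ˣ, χ t =
      χ' (Units.map (ZMod.castHom (pow_dvd_pow p (Nat.sub_le r 1))
            (ZMod (p ^ (r - 1)))).toMonoidHom t))
    (τ : ZMod (p ^ r) → (↥K)ˣ) (hτ0 : τ 0 = 1) (hτadd : ∀ a b, τ (a + b) = τ a * τ b)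
    (hτni : ¬ Function.Injective τ)
    (τ' : ZMod (p ^ (r - 1)) → (↥K)ˣ)
    (hτ : ∀ t : ZMod (p ^ r), τ t =
      τ' (ZMod.castHom (pow_dvd_pow p (Nat.sub_le r 1)) (ZMod (p ^ (r - 1))) t)) :
    ∑ t : (ZMod (p ^ r))ˣ, ((χ t : (↥K)ˣ) : ↥K) * ((τ (t : ZMod (p ^ r)) : (↥K)ˣ) : ↥K)
      = (p : ↥K) *
        ∑ t : (ZMod (p ^ (r - 1)))ˣ,
          ((χ' t : (↥K)ˣ) : ↥K) * ((τ' (t : ZMod (p ^ (r - 1))) : (↥K)ˣ) : ↥K) := by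
  classical
  set g : (ZMod (p ^ r))ˣ →* (ZMod (p ^ (r - 1)))ˣ :=
    ZMod.unitsMap (pow_dvd_pow p (Nat.sub_le r 1)) with hg
  have hgs : Function.Surjective g := ZMod.unitsMap_surjective _
  set f : (ZMod (p ^ (r - 1)))ˣ → ↥K := fun u =>
    ((χ' u : (↥K)ˣ) : ↥K) * ((τ' (u : ZMod (p ^ (r - 1))) : (↥K)ˣ) : ↥K) with hf
  have h1 : ∀ t : (ZMod (p ^ r))ˣ,
      ((χ t : (↥K)ˣ) : ↥K) * ((τ (t : ZMod (p ^ r)) : (↥K)ˣ) : ↥K) = f (g t) := by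
    intro t
    rw [hχ t, hτ]
    rfl
  -- fiber cardinality
  set c : ℕ := (Finset.univ.filter (fun t : (ZMod (p ^ r))ˣ => g t = 1)).card with hc
  have hfib : ∀ u : (ZMod (p ^ (r - 1)))ˣ, (Finset.univ.filter (fun t : (ZMod (p ^ r))ˣ => g t = u)).card = c :=
    fun u => MonoidHom.card_fiber_eq_of_mem_range g (hgs u) (hgs 1)
  have hcardG : Fintype.card (ZMod (p ^ r))ˣ =
      Fintype.card (ZMod (p ^ (r - 1)))ˣ * c := by
    rw [← Finset.card_univ (α := (ZMod (p ^ r))ˣ),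
      Finset.card_eq_sum_card_fiberwise (fun x _ => Finset.mem_univ (g x))]
    rw [Finset.sum_congr rfl fun u _ => hfib u, Finset.sum_const, Finset.card_univ,
      smul_eq_mul]
  have hr1 : 1 ≤ r - 1 := by omega
  have htot : Fintype.card (ZMod (p ^ r))ˣ =
      Fintype.card (ZMod (p ^ (r - 1)))ˣ * p := by
    rw [ZMod.card_units_eq_totient, ZMod.card_units_eq_totient,
      Nat.totient_prime_pow hp (by omega : 0 < r),
      Nat.totient_prime_pow hp (by omega : 0 < r - 1)]
    have h2 : p ^ (r - 1) = p ^ (r - 1 - 1) * p := by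
      rw [← pow_succ]; congr 1; omega
    rw [h2]; ring
  have hcardpos : 0 < Fintype.card (ZMod (p ^ (r - 1)))ˣ := Fintype.card_pos
  have hcp : c = p := by
    have := hcardG.symm.trans htot
    exact Nat.eq_of_mul_eq_mul_left hcardpos this
  calc
    ∑ t : (ZMod (p ^ r))ˣ, ((χ t : (↥K)ˣ) : ↥K) * ((τ (t : ZMod (p ^ r)) : (↥K)ˣ) : ↥K)
        = ∑ t : (ZMod (p ^ r))ˣ, f (g t) := Finset.sum_congr rfl fun t _ => h1 t
    _ = ∑ u : (ZMod (p ^ (r - 1)))ˣ, ∑ t ∈ Finset.univ.filter (fun t => g t = u), f (g t) :=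
        (Finset.sum_fiberwise_of_maps_to (fun x _ => Finset.mem_univ (g x)) _).symm
    _ = ∑ u : (ZMod (p ^ (r - 1)))ˣ, (p : ℕ) • f u := by
        refine Finset.sum_congr rfl fun u _ => ?_
        rw [Finset.sum_congr rfl (fun t ht => by
          rw [(Finset.mem_filter.mp ht).2]), Finset.sum_const, hfib u, hcp]
    _ = (p : ↥K) * ∑ t : (ZMod (p ^ (r - 1)))ˣ,
          ((χ' t : (↥K)ˣ) : ↥K) * ((τ' (t : ZMod (p ^ (r - 1))) : (↥K)ˣ) : ↥K) := by
        rw [← Finset.smul_sum, nsmul_eq_mul]
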